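/- With the setup described in the context, suppose moreover that v, m ∈ ℤ^N and a ∈ ℤ^r satisfy: ⟨v,u_i⟩ + a_i = 0 for i = 1,…,N; ⟨m,u_i⟩ + a_i = 0 for i = 1,…,N−k; and ⟨m,u_i⟩ + a_i ≥ 0 for all i = 1,…,r. Let m̃ ∈ ℤ^k be the vector of the last k coordinates of the row vector (m−v)·(Tᵀ)⁻¹ (whose first N−k coordinates vanish). Then for every y ∈ (Kˣ)^k, ∏_{i=1}^r (x(y)_i)^{⟨m,u_i⟩+a_i} = ∏_{j=1}^k ((y^{L2})_j)^{m̃_j}, where the left-hand side is computed in K (with 0^0 = 1) and the right-hand side uses integer powers in Kˣ. (Paper: Proposition 3.15 'propRM'.) -/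
import Mathlib


/-- The `N×N` submatrix of an `r×N` matrix formed by its first `N` rows. -/
def firstRows {r N : ℕ} (hNr : N ≤ r) (A : Matrix (Fin r) (Fin N) ℤ) :
    Matrix (Fin N) (Fin N) ℤ :=
  Matrix.of fun i j => A ⟨(i : ℕ), by have := i.isLt; omega⟩ j

/-- The `k×k` bottom-right block of an `N×N` matrix (rows and columns
`N-k+1, …, N`). -/
def lowerRight {N k : ℕ} (hkN : k ≤ N) (H : Matrix (Fin N) (Fin N) ℤ) :
    Matrix (Fin k) (Fin k) ℤ :=
  Matrix.of fun i j =>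
    H ⟨N - k + (i : ℕ), by have := i.isLt; omega⟩
      ⟨N - k + (j : ℕ), by have := j.isLt; omega⟩

/-- The `v`-normalized tuple `x(y) ∈ K^r` attached to `y ∈ (Kˣ)^k`. -/
def xvec {K : Type*} [Field K] {k N r : ℕ} (hkN : k ≤ N) (hNr : N ≤ r)
    (y : Fin k → Kˣ) : Fin r → K :=
  fun i =>
    if h1 : (i : ℕ) < N - k then 0
    else if h2 : (i : ℕ) < N then (y ⟨(i : ℕ) - (N - k), by omega⟩ : K)
    else 1

private lemma zpow_sum' {G : Type*} [CommGroup G] {ι : Type*} (g : G) (s : Finset ι)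
    (f : ι → ℤ) : g ^ (∑ i ∈ s, f i) = ∏ i ∈ s, g ^ f i := by
  induction s using Finset.cons_induction with
  | empty => simp
  | cons a s ha ih => rw [Finset.sum_cons, Finset.prod_cons, zpow_add, ih]


/-- Proposition 3.15 'propRM': the evaluation of the monomial
`χ^{⟨m,P⟩}` at the `v`-normalized tuple `x(y)` equals
`∏_j ((y^{L2})_j)^{m̃_j}`, where `m̃` is the vector of the last `k` coordinates
of the row vector `(m-v)·(Tᵀ)⁻¹`. -/
theorem stmt_8 {K : Type*} [Field K] [IsAlgClosed K] {k N r : ℕ}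
    (hk : 0 < k) (hkN : k ≤ N) (hNr : N ≤ r)
    (A : Matrix (Fin r) (Fin N) ℤ)
    (T : Matrix (Fin N) (Fin N) ℤ) (hT : IsUnit T.det)
    (hlow : ∀ i j : Fin N, (i : ℕ) < (j : ℕ) → (firstRows hNr A * T) i j = 0)
    (hdet : (firstRows hNr A).det ≠ 0)
    (hchar : ∀ p : ℕ, 0 < p → CharP K p → ¬ ((p : ℤ) ∣ (firstRows hNr A).det))
    (v m : Fin N → ℤ) (a : Fin r → ℤ)
    (hv : ∀ i : Fin r, (i : ℕ) < N → (∑ j : Fin N, v j * A i j) + a i = 0)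
    (hm0 : ∀ i : Fin r, (i : ℕ) < N - k → (∑ j : Fin N, m j * A i j) + a i = 0)
    (hm : ∀ i : Fin r, 0 ≤ (∑ j : Fin N, m j * A i j) + a i)
    (y : Fin k → Kˣ) :
    ∏ i : Fin r, (xvec hkN hNr y i) ^ ((∑ j : Fin N, m j * A i j) + a i).toNat
      = ((∏ j : Fin k,
            (∏ i : Fin k, y i ^ lowerRight hkN (firstRows hNr A * T) i j)
              ^ (Matrix.vecMul (m - v) (T.transpose)⁻¹
                  ⟨N - k + (j : ℕ), by have := j.isLt; omega⟩) : Kˣ) : K) := by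
  classical
  set A' := firstRows hNr A with hA'def
  set H := A' * T with hHdef
  set w : Fin N → ℤ := Matrix.vecMul (m - v) (T.transpose)⁻¹ with hwdef
  let E : Fin r → ℤ := fun i => (∑ j : Fin N, m j * A i j) + a i
  let embN : Fin k ↪ Fin N :=
    ⟨fun j => ⟨N - k + (j : ℕ), by have := j.isLt; omega⟩, by
      intro a b h
      have : N - k + (a : ℕ) = N - k + (b : ℕ) := congrArg Fin.val h
      exact Fin.ext (by omega)⟩
  let embr : Fin k ↪ Fin r :=
    ⟨fun j => ⟨N - k + (j : ℕ), by have := j.isLt; omega⟩, by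
      intro a b h
      have : N - k + (a : ℕ) = N - k + (b : ℕ) := congrArg Fin.val h
      exact Fin.ext (by omega)⟩
  have hTt : IsUnit (T.transpose).det := by rwa [Matrix.det_transpose]
  have hmv : ∀ j : Fin N, m j - v j = ∑ l, w l * T j l := by
    intro j
    have h1 : Matrix.vecMul w T.transpose = m - v := by
      rw [hwdef, Matrix.vecMul_vecMul, Matrix.nonsing_inv_mul _ hTt, Matrix.vecMul_one]
    calc m j - v j = (m - v) j := rfl
      _ = Matrix.vecMul w T.transpose j := (congrFun h1 j).symm
      _ = ∑ l, w l * T j l := by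
          simp [Matrix.vecMul, dotProduct, Matrix.transpose_apply]
  have hE : ∀ i : Fin N, E ⟨(i : ℕ), lt_of_lt_of_le i.isLt hNr⟩ = ∑ l, w l * H i l := by
    intro i
    have hvi := hv ⟨(i : ℕ), lt_of_lt_of_le i.isLt hNr⟩ i.isLt
    have h2 : E ⟨(i : ℕ), lt_of_lt_of_le i.isLt hNr⟩ = ∑ j, (m j - v j) * A' i j := by
      have : ∀ j, (m j - v j) * A' i j
          = m j * A ⟨(i : ℕ), lt_of_lt_of_le i.isLt hNr⟩ j
            - v j * A ⟨(i : ℕ), lt_of_lt_of_le i.isLt hNr⟩ j := by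
        intro j
        show (m j - v j) * A ⟨(i : ℕ), _⟩ j = _
        ring
      rw [Finset.sum_congr rfl fun j _ => this j, Finset.sum_sub_distrib]
      have := hvi
      show (∑ j : Fin N, m j * A _ j) + a _ = _
      omega
    rw [h2]
    have h3 : ∀ j, (m j - v j) * A' i j = ∑ l, w l * T j l * A' i j := by
      intro j; rw [hmv j, Finset.sum_mul]
    rw [Finset.sum_congr rfl fun j _ => h3 j, Finset.sum_comm]
    refine Finset.sum_congr rfl fun l _ => ?_
    rw [hHdef, Matrix.mul_apply, Finset.mul_sum]
    exact Finset.sum_congr rfl fun j _ => by ring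
  have hdiag : ∀ l : Fin N, H l l ≠ 0 := by
    have h2 : H.det ≠ 0 := by
      rw [hHdef, Matrix.det_mul]
      exact mul_ne_zero hdet hT.ne_zero
    have h3 : H.det = ∏ l, H l l := by
      refine Matrix.det_of_lowerTriangular H ?_
      intro i j hij
      exact hlow i j (by exact_mod_cast hij)
    intro l hl
    exact h2 (h3.trans (Finset.prod_eq_zero (Finset.mem_univ l) hl))
  have hw0 : ∀ l : Fin N, (l : ℕ) < N - k → w l = 0 := by
    suffices h : ∀ n : ℕ, ∀ l : Fin N, (l : ℕ) = n → (l : ℕ) < N - k → w l = 0 by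
      intro l hl; exact h l l rfl hl
    intro n
    induction n using Nat.strong_induction_on with
    | _ n ih =>
      intro l hln hl
      subst hln
      have h0 : E ⟨(l : ℕ), lt_of_lt_of_le l.isLt hNr⟩ = 0 :=
        hm0 _ (by simpa using hl)
      have h1 : (∑ l', w l' * H l l') = 0 := (hE l).symm.trans h0
      rw [Finset.sum_eq_single l] at h1
      · rcases mul_eq_zero.mp h1 with h | h
        · exact h
        · exact absurd h (hdiag l)
      · intro b _ hbl
        rcases lt_or_gt_of_ne (fun h => hbl (Fin.ext h)) with hb | hb
        · rw [ih b hb b rfl (by omega), zero_mul]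
        · rw [hlow l b hb, mul_zero]
      · intro h; exact absurd (Finset.mem_univ l) h
  have hnotmemN : ∀ x : Fin N, x ∉ Finset.univ.map embN → (x : ℕ) < N - k := by
    intro x hx
    by_contra hge
    exact hx (Finset.mem_map.mpr ⟨⟨(x : ℕ) - (N - k), by have := x.isLt; omega⟩,
      Finset.mem_univ _, Fin.ext (show N - k + ((x : ℕ) - (N - k)) = (x : ℕ) by omega)⟩)
  have hnotmemr : ∀ x : Fin r, x ∉ Finset.univ.map embr →
      (x : ℕ) < N - k ∨ N ≤ (x : ℕ) := by
    intro x hx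
    by_contra hge
    push_neg at hge
    exact hx (Finset.mem_map.mpr ⟨⟨(x : ℕ) - (N - k), by omega⟩,
      Finset.mem_univ _, Fin.ext (show N - k + ((x : ℕ) - (N - k)) = (x : ℕ) by omega)⟩)
  have hc : ∀ i' : Fin k, E (embr i')
      = ∑ j' : Fin k, w (embN j') * H (embN i') (embN j') := by
    intro i'
    have h1 : E (embr i') = ∑ l, w l * H (embN i') l := hE (embN i')
    rw [h1, ← Finset.sum_map Finset.univ embN (fun l => w l * H (embN i') l)]
    refine (Finset.sum_subset (Finset.subset_univ _) ?_).symm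
    intro x _ hx
    rw [hw0 x (hnotmemN x hx), zero_mul]
  -- LHS
  have hyval : ∀ i' : Fin k, xvec hkN hNr y (embr i') = (y i' : K) := by
    intro i'
    have h1 : ¬ ((embr i' : ℕ) < N - k) := show ¬ (N - k + (i' : ℕ) < N - k) by omega
    have h2 : (embr i' : ℕ) < N := show N - k + (i' : ℕ) < N by have := i'.isLt; omega
    rw [xvec, dif_neg h1, dif_pos h2]
    exact congrArg _ (congrArg y (Fin.ext (by
      show N - k + (i' : ℕ) - (N - k) = (i' : ℕ); omega)))
  have hL : (∏ i : Fin r, xvec hkN hNr y i ^ (E i).toNat)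
      = ∏ i' : Fin k, (y i' : K) ^ (E (embr i')).toNat := by
    calc ∏ i : Fin r, xvec hkN hNr y i ^ (E i).toNat
        = ∏ i ∈ Finset.univ.map embr, xvec hkN hNr y i ^ (E i).toNat := by
          refine (Finset.prod_subset (Finset.subset_univ _) ?_).symm
          intro x _ hx
          rcases hnotmemr x hx with h | h
          · have hx0 : E x = 0 := hm0 x h
            rw [hx0]
            simp
          · have : xvec hkN hNr y x = 1 := by
              rw [xvec, dif_neg (by omega), dif_neg (by omega)]
            rw [this, one_pow]
      _ = ∏ i' : Fin k, xvec hkN hNr y (embr i') ^ (E (embr i')).toNat :=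
          Finset.prod_map _ _ _
      _ = ∏ i' : Fin k, (y i' : K) ^ (E (embr i')).toNat := by
          exact Finset.prod_congr rfl fun i' _ => by rw [hyval i']
  show (∏ i : Fin r, xvec hkN hNr y i ^ (E i).toNat) = _
  rw [hL]
  -- RHS
  have hRunits : (∏ j : Fin k,
        (∏ i : Fin k, y i ^ lowerRight hkN H i j) ^ (w (embN j)))
      = ∏ i' : Fin k, y i' ^ (E (embr i')) := by
    have step1 : ∀ j : Fin k, (∏ i : Fin k, y i ^ lowerRight hkN H i j) ^ (w (embN j))
        = ∏ i : Fin k, y i ^ (lowerRight hkN H i j * w (embN j)) := by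
      intro j
      rw [← Finset.prod_zpow]
      exact Finset.prod_congr rfl fun i _ => by rw [← zpow_mul]
    rw [Finset.prod_congr rfl fun j _ => step1 j, Finset.prod_comm]
    refine Finset.prod_congr rfl fun i' _ => ?_
    rw [← zpow_sum']
    congr 1
    rw [hc i']
    refine Finset.sum_congr rfl fun j' _ => ?_
    have : lowerRight hkN H i' j' = H (embN i') (embN j') := rfl
    rw [this]; ring
  calc ∏ i' : Fin k, (y i' : K) ^ (E (embr i')).toNat
      = ∏ i' : Fin k, ((y i' ^ (E (embr i')) : Kˣ) : K) := by
        refine Finset.prod_congr rfl fun i' _ => ?_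
        rw [Units.val_zpow_eq_zpow_val, ← zpow_natCast, Int.toNat_of_nonneg (hm (embr i'))]
    _ = ((∏ i' : Fin k, y i' ^ (E (embr i')) : Kˣ) : K) := (Units.coe_prod _ _).symm
    _ = _ := by rw [← hRunits]; rfl
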